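/- Let d > 0, ω ≠ 0 and c real, set κ = 1 + c/(2√(2d)) and s = √(κ² + ω√(2d)) (assuming κ² + ω√(2d) ≥ 0). For σ ∈ {+1, −1}, define α = κ − σ·s and f(z) = z − (κ + σ·s)/ω. Then for every z ∈ ℝ, z²·f″(z) + ((c/√(2d) + 2)·z + √(2d) − ω z²)·f′(z) + ω·z·f(z) = α·f(z). -/

import Mathlib

/-- n = 1 QES sector of the inverse sextic power potential: the
Stäckel-transformed operator has eigenvalues `α = κ - σs` with
`κ = 1 + c/(2√(2d))`, `s = √(κ² + ω√(2d))`, and linear polynomial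
eigenfunctions `f(z) = z - (κ + σs)/ω`. -/
theorem inverse_sextic_n1 (d ω c : ℝ) (hd : 0 < d) (hω : ω ≠ 0)
    (κ : ℝ) (hκ : κ = 1 + c / (2 * Real.sqrt (2 * d)))
    (hnonneg : 0 ≤ κ ^ 2 + ω * Real.sqrt (2 * d))
    (s : ℝ) (hs : s = Real.sqrt (κ ^ 2 + ω * Real.sqrt (2 * d)))
    (σ : ℝ) (hσ : σ = 1 ∨ σ = -1)
    (α : ℝ) (hα : α = κ - σ * s)
    (f : ℝ → ℝ) (hf : f = fun z : ℝ => z - (κ + σ * s) / ω)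
    (z : ℝ) :
    z ^ 2 * deriv (deriv f) z
      + ((c / Real.sqrt (2 * d) + 2) * z + Real.sqrt (2 * d) - ω * z ^ 2) * deriv f z
      + ω * z * f z
    = α * f z := by
  have hr : (0:ℝ) < Real.sqrt (2 * d) := Real.sqrt_pos.2 (by linarith)
  have hd1 : deriv f = fun _ : ℝ => 1 := by
    funext x
    simp [hf]
  have hd2 : deriv (deriv f) z = 0 := by
    rw [hd1]; simp
  have hs2 : s ^ 2 = κ ^ 2 + ω * Real.sqrt (2 * d) := by
    rw [hs, sq, Real.mul_self_sqrt hnonneg]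
  have hσ2 : σ ^ 2 = 1 := by rcases hσ with h | h <;> simp [h]
  have hc : c / Real.sqrt (2 * d) = 2 * (κ - 1) := by
    rw [hκ]; field_simp; ring
  rw [hd2, hd1, hf, hα, hc]
  simp only
  field_simp
  have hsq : Real.sqrt 2 * Real.sqrt d = Real.sqrt (2 * d) :=
    (Real.sqrt_mul (by norm_num) d).symm
  linear_combination - s ^ 2 * hσ2 - hs2
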